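/- Let (A, μ, Δ, α, c, R) be a quasi-triangular Hom-bialgebra with α surjective, and set Rᵅ = (α ⊗ α)(R). Then (A, μ, Δ, α, c, Rᵅ) is also a quasi-triangular Hom-bialgebra; i.e., Rᵅ satisfies (Δ ⊗ α)(Rᵅ) = Rᵅ₁₃Rᵅ₂₃, (α ⊗ Δ)(Rᵅ) = Rᵅ₁₃Rᵅ₁₂, and ((τ∘Δ)(x))Rᵅ = RᵅΔ(x) for all x ∈ A. -/
import Mathlib


open TensorProduct

variable {k : Type*} [CommRing k] {A : Type*} [AddCommGroup A] [Module k A]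

/-- Componentwise product on `A ⊗ A` induced by a bilinear multiplication `μ`. -/
noncomputable def mulT2 (μ : A →ₗ[k] A →ₗ[k] A) (X Y : A ⊗[k] A) : A ⊗[k] A :=
  ((TensorProduct.map (TensorProduct.lift μ) (TensorProduct.lift μ)) ∘ₗ
    (TensorProduct.tensorTensorTensorComm k A A A A).toLinearMap) (X ⊗ₜ[k] Y)

/-- Componentwise product on `(A ⊗ A) ⊗ A` induced by `μ`. -/
noncomputable def mulT3 (μ : A →ₗ[k] A →ₗ[k] A) (X Y : (A ⊗[k] A) ⊗[k] A) :
    (A ⊗[k] A) ⊗[k] A :=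
  ((TensorProduct.map
      ((TensorProduct.map (TensorProduct.lift μ) (TensorProduct.lift μ)) ∘ₗ
        (TensorProduct.tensorTensorTensorComm k A A A A).toLinearMap)
      (TensorProduct.lift μ)) ∘ₗ
    (TensorProduct.tensorTensorTensorComm k (A ⊗[k] A) A (A ⊗[k] A) A).toLinearMap)
    (X ⊗ₜ[k] Y)

/-- `R₁₂ = R ⊗ c`. -/
noncomputable def R12e (c : A) (R : A ⊗[k] A) : (A ⊗[k] A) ⊗[k] A := R ⊗ₜ[k] c

/-- `R₂₃ = c ⊗ R`. -/
noncomputable def R23e (c : A) (R : A ⊗[k] A) : (A ⊗[k] A) ⊗[k] A :=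
  (TensorProduct.assoc k A A A).symm (c ⊗ₜ[k] R)

/-- `R₁₃ = (τ ⊗ Id)(R₂₃)`. -/
noncomputable def R13e (c : A) (R : A ⊗[k] A) : (A ⊗[k] A) ⊗[k] A :=
  TensorProduct.map (TensorProduct.comm k A A).toLinearMap LinearMap.id (R23e c R)


section Aux

variable (μ : A →ₗ[k] A →ₗ[k] A)

lemma mulT2_tmul (a b x y : A) :
    mulT2 μ (a ⊗ₜ[k] b) (x ⊗ₜ[k] y) = μ a x ⊗ₜ[k] μ b y := by
  simp [mulT2]

lemma mulT3_tmul (a b e x y z : A) :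
    mulT3 μ ((a ⊗ₜ[k] b) ⊗ₜ[k] e) ((x ⊗ₜ[k] y) ⊗ₜ[k] z)
      = (μ a x ⊗ₜ[k] μ b y) ⊗ₜ[k] μ e z := by
  simp [mulT3]

lemma mulT2_zero_left (Y : A ⊗[k] A) : mulT2 μ 0 Y = 0 := by
  simp [mulT2, zero_tmul]

lemma mulT2_zero_right (X : A ⊗[k] A) : mulT2 μ X 0 = 0 := by
  simp [mulT2, tmul_zero]

lemma mulT2_add_left (X X' Y : A ⊗[k] A) :
    mulT2 μ (X + X') Y = mulT2 μ X Y + mulT2 μ X' Y := by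
  simp [mulT2, add_tmul]

lemma mulT2_add_right (X Y Y' : A ⊗[k] A) :
    mulT2 μ X (Y + Y') = mulT2 μ X Y + mulT2 μ X Y' := by
  simp [mulT2, tmul_add]

lemma mulT3_zero_left (Y : (A ⊗[k] A) ⊗[k] A) : mulT3 μ 0 Y = 0 := by
  simp [mulT3, zero_tmul]

lemma mulT3_zero_right (X : (A ⊗[k] A) ⊗[k] A) : mulT3 μ X 0 = 0 := by
  simp [mulT3, tmul_zero]

lemma mulT3_add_left (X X' Y : (A ⊗[k] A) ⊗[k] A) :
    mulT3 μ (X + X') Y = mulT3 μ X Y + mulT3 μ X' Y := by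
  simp [mulT3, add_tmul]

lemma mulT3_add_right (X Y Y' : (A ⊗[k] A) ⊗[k] A) :
    mulT3 μ X (Y + Y') = mulT3 μ X Y + mulT3 μ X Y' := by
  simp [mulT3, tmul_add]

lemma R12e_zero (c : A) : R12e (k := k) c 0 = 0 := by simp [R12e, zero_tmul]

lemma R12e_add (c : A) (X X' : A ⊗[k] A) : R12e c (X + X') = R12e c X + R12e c X' := by
  simp [R12e, add_tmul]

lemma R23e_zero (c : A) : R23e (k := k) c 0 = 0 := by simp [R23e, tmul_zero]

lemma R23e_add (c : A) (X X' : A ⊗[k] A) : R23e c (X + X') = R23e c X + R23e c X' := by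
  simp [R23e, tmul_add]

lemma R13e_zero (c : A) : R13e (k := k) c 0 = 0 := by simp [R13e, R23e_zero]

lemma R13e_add (c : A) (X X' : A ⊗[k] A) : R13e c (X + X') = R13e c X + R13e c X' := by
  simp [R13e, R23e_add]

/-- `α ⊗ α` is multiplicative for `mulT2` when `α` is multiplicative. -/
lemma map_mulT2 (α : A →ₗ[k] A) (hαμ : ∀ x y : A, α (μ x y) = μ (α x) (α y))
    (X Y : A ⊗[k] A) :
    TensorProduct.map α α (mulT2 μ X Y)
      = mulT2 μ (TensorProduct.map α α X) (TensorProduct.map α α Y) := by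
  induction X using TensorProduct.induction_on with
  | zero => simp [mulT2_zero_left]
  | add X X' hX hX' => simp [mulT2_add_left, hX, hX']
  | tmul a b =>
    induction Y using TensorProduct.induction_on with
    | zero => simp [mulT2_zero_right]
    | add Y Y' hY hY' => simp [mulT2_add_right, hY, hY']
    | tmul x y => simp [mulT2_tmul, hαμ]

lemma assoc_symm_nat (α : A →ₗ[k] A) (t : A ⊗[k] (A ⊗[k] A)) :
    (TensorProduct.assoc k A A A).symm (TensorProduct.map α (TensorProduct.map α α) t)
      = TensorProduct.map (TensorProduct.map α α) α
        ((TensorProduct.assoc k A A A).symm t) := by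
  induction t using TensorProduct.induction_on with
  | zero => simp
  | add t t' ht ht' => simp [ht, ht']
  | tmul x s =>
    induction s using TensorProduct.induction_on with
    | zero => simp
    | add s s' hs hs' =>
      simp only [tmul_add, map_tmul, map_add] at *
      rw [hs, hs']
    | tmul y z => simp [TensorProduct.assoc_symm_tmul]

/-- Key lemma A : twisting `R₁₃ R₂₃`. -/
lemma map_mulT3_1323 (α : A →ₗ[k] A) (c : A)
    (hαμ : ∀ x y : A, α (μ x y) = μ (α x) (α y))
    (hcl : ∀ x : A, μ c x = α x) (hcr : ∀ x : A, μ x c = α x)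
    (X Y : A ⊗[k] A) :
    TensorProduct.map (TensorProduct.map α α) α (mulT3 μ (R13e c X) (R23e c Y))
      = mulT3 μ (R13e c (TensorProduct.map α α X)) (R23e c (TensorProduct.map α α Y)) := by
  induction X using TensorProduct.induction_on with
  | zero => simp [R13e_zero, mulT3_zero_left]
  | add X X' hX hX' =>
    simp only [map_add, R13e_add, mulT3_add_left, hX, hX']
  | tmul a b =>
    induction Y using TensorProduct.induction_on with
    | zero => simp [R23e_zero, mulT3_zero_right]
    | add Y Y' hY hY' =>
      simp only [map_add, R23e_add, mulT3_add_right, hY, hY']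
    | tmul x y =>
      simp [R13e, R23e, TensorProduct.assoc_symm_tmul, mulT3_tmul, hcl, hcr, hαμ]

/-- Key lemma B : twisting `R₁₃ R₁₂`. -/
lemma map_mulT3_1312 (α : A →ₗ[k] A) (c : A)
    (hαμ : ∀ x y : A, α (μ x y) = μ (α x) (α y))
    (hcl : ∀ x : A, μ c x = α x) (hcr : ∀ x : A, μ x c = α x)
    (X Y : A ⊗[k] A) :
    TensorProduct.map (TensorProduct.map α α) α (mulT3 μ (R13e c X) (R12e c Y))
      = mulT3 μ (R13e c (TensorProduct.map α α X)) (R12e c (TensorProduct.map α α Y)) := by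
  induction X using TensorProduct.induction_on with
  | zero => simp [R13e_zero, mulT3_zero_left]
  | add X X' hX hX' =>
    simp only [map_add, R13e_add, mulT3_add_left, hX, hX']
  | tmul a b =>
    induction Y using TensorProduct.induction_on with
    | zero => simp [R12e_zero, mulT3_zero_right]
    | add Y Y' hY hY' =>
      simp only [map_add, R12e_add, mulT3_add_right, hY, hY']
    | tmul x y =>
      simp [R12e, R13e, R23e, TensorProduct.assoc_symm_tmul, mulT3_tmul, hcl, hcr, hαμ]

end Aux

/-- If `(A, μ, Δ, α, c, R)` is a quasi-triangular Hom-bialgebra with `α`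
surjective, then `(A, μ, Δ, α, c, Rᵅ)` with `Rᵅ = (α ⊗ α)(R)` is also a quasi-triangular
Hom-bialgebra. -/
theorem twisted_R_quasi_triangular
    (μ : A →ₗ[k] A →ₗ[k] A) (Δ : A →ₗ[k] A ⊗[k] A) (α : A →ₗ[k] A) (c : A) (R : A ⊗[k] A)
    (hαμ : ∀ x y : A, α (μ x y) = μ (α x) (α y))
    (hassoc : ∀ x y z : A, μ (μ x y) (α z) = μ (α x) (μ y z))
    (hαΔ : Δ ∘ₗ α = TensorProduct.map α α ∘ₗ Δ)
    (hcoassoc : (TensorProduct.assoc k A A A).toLinearMap ∘ₗ TensorProduct.map Δ α ∘ₗ Δ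
      = TensorProduct.map α Δ ∘ₗ Δ)
    (hcompat : ∀ x y : A, Δ (μ x y) = mulT2 μ (Δ x) (Δ y))
    (hcl : ∀ x : A, μ c x = α x) (hcr : ∀ x : A, μ x c = α x)
    (hR1 : TensorProduct.map Δ α R = mulT3 μ (R13e c R) (R23e c R))
    (hR2 : (TensorProduct.assoc k A A A).symm (TensorProduct.map α Δ R)
      = mulT3 μ (R13e c R) (R12e c R))
    (hR3 : ∀ x : A, mulT2 μ ((TensorProduct.comm k A A) (Δ x)) R = mulT2 μ R (Δ x))
    (hsurj : Function.Surjective α) :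
    (TensorProduct.map Δ α (TensorProduct.map α α R)
        = mulT3 μ (R13e c (TensorProduct.map α α R)) (R23e c (TensorProduct.map α α R))) ∧
    ((TensorProduct.assoc k A A A).symm (TensorProduct.map α Δ (TensorProduct.map α α R))
        = mulT3 μ (R13e c (TensorProduct.map α α R)) (R12e c (TensorProduct.map α α R))) ∧
    (∀ x : A, mulT2 μ ((TensorProduct.comm k A A) (Δ x)) (TensorProduct.map α α R)
        = mulT2 μ (TensorProduct.map α α R) (Δ x)) := by
  refine ⟨?_, ?_, ?_⟩
  · have h1 : TensorProduct.map Δ α (TensorProduct.map α α R)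
        = TensorProduct.map (TensorProduct.map α α) α (TensorProduct.map Δ α R) := by
      rw [← LinearMap.comp_apply, ← LinearMap.comp_apply,
        ← TensorProduct.map_comp, ← TensorProduct.map_comp, hαΔ]
    rw [h1, hR1, map_mulT3_1323 μ α c hαμ hcl hcr]
  · have h1 : TensorProduct.map α Δ (TensorProduct.map α α R)
        = TensorProduct.map α (TensorProduct.map α α) (TensorProduct.map α Δ R) := by
      rw [← LinearMap.comp_apply, ← LinearMap.comp_apply,
        ← TensorProduct.map_comp, ← TensorProduct.map_comp, hαΔ]
    rw [h1, assoc_symm_nat, hR2, map_mulT3_1312 μ α c hαμ hcl hcr]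
  · intro x
    obtain ⟨y, rfl⟩ := hsurj x
    have hΔ : Δ (α y) = TensorProduct.map α α (Δ y) := LinearMap.congr_fun hαΔ y
    have hcomm : (TensorProduct.comm k A A) (TensorProduct.map α α (Δ y))
        = TensorProduct.map α α ((TensorProduct.comm k A A) (Δ y)) := by
      induction (Δ y) using TensorProduct.induction_on with
      | zero => simp
      | add s s' hs hs' => simp [hs, hs']
      | tmul a b => simp
    rw [hΔ, hcomm, ← map_mulT2 μ α hαμ, hR3, map_mulT2 μ α hαμ]
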